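/- The proximal operator of λ times the ℓ_{1,2} group norm (sum of column Euclidean norms) acts column-wise by block soft-thresholding: the i-th column of prox_{λ‖·‖_{1,2}}(M) equals (1 − λ/max(‖M_{:i}‖₂, λ)) M_{:i}, i.e., it is 0 if ‖M_{:i}‖₂ ≤ λ and (1 − λ/‖M_{:i}‖₂) M_{:i} otherwise. -/

import Mathlib

open BigOperators

/-- Squared Frobenius norm. -/
def frobSq {m n : ℕ} (A : Matrix (Fin m) (Fin n) ℝ) : ℝ :=
  ∑ i, ∑ j, (A i j)^2

/-- Euclidean norm of the `i`-th column of `A`. -/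
noncomputable def colNorm {m n : ℕ} (A : Matrix (Fin m) (Fin n) ℝ) (i : Fin n) : ℝ :=
  Real.sqrt (∑ r, (A r i)^2)

/-- The ℓ_{1,2} group norm: sum of Euclidean norms of the columns. -/
noncomputable def l12Norm {m n : ℕ} (A : Matrix (Fin m) (Fin n) ℝ) : ℝ :=
  ∑ i, colNorm A i

/-- Cauchy–Schwarz in the form we need. -/
lemma dot_le_sqrt_mul_sqrt {m : ℕ} (v z : Fin m → ℝ) :
    (∑ r, v r * z r) ≤ Real.sqrt (∑ r, (v r)^2) * Real.sqrt (∑ r, (z r)^2) := by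
  have h := Finset.sum_mul_sq_le_sq_mul_sq Finset.univ v z
  have h1 : 0 ≤ ∑ r, (v r)^2 := Finset.sum_nonneg fun r _ => sq_nonneg _
  have h2 : 0 ≤ ∑ r, (z r)^2 := Finset.sum_nonneg fun r _ => sq_nonneg _
  calc (∑ r, v r * z r) ≤ |∑ r, v r * z r| := le_abs_self _
    _ = Real.sqrt ((∑ r, v r * z r)^2) := (Real.sqrt_sq_eq_abs _).symm
    _ ≤ Real.sqrt ((∑ r, (v r)^2) * ∑ r, (z r)^2) := Real.sqrt_le_sqrt h
    _ = _ := Real.sqrt_mul h1 _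

lemma sum_sub_sq {m : ℕ} (v z : Fin m → ℝ) :
    (∑ r, (v r - z r)^2) = (∑ r, (v r)^2) - 2*(∑ r, v r * z r) + ∑ r, (z r)^2 := by
  have h : ∀ r : Fin m, (v r - z r)^2 = (v r)^2 - 2*(v r * z r) + (z r)^2 := fun r => by ring
  simp_rw [h]
  rw [Finset.sum_add_distrib, Finset.sum_sub_distrib, Finset.mul_sum]

lemma case2_ineq (lam a nz D c Q : ℝ) (hQ : Q = a^2)
    (key : (1-c)*D ≤ lam*nz) (h1c : (1-c)*a = lam) :
    1/2*((1-c)^2*Q) + lam*(c*a) + 1/2*(nz^2 - 2*c*D + c^2*Q)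
      ≤ 1/2*(Q - 2*D + nz^2) + lam*nz := by
  subst hQ
  have h0 : c*a*((1-c)*a - lam) = 0 := by rw [h1c]; ring
  nlinarith [key, h0]

/-- Key per-column inequality. -/
lemma col_key {m : ℕ} (lam : ℝ) (hlam : 0 < lam) (v z : Fin m → ℝ) :
    (1/2) * (∑ r, (v r - (1 - lam / max (Real.sqrt (∑ r', (v r')^2)) lam) * v r)^2)
      + lam * Real.sqrt (∑ r, ((1 - lam / max (Real.sqrt (∑ r', (v r')^2)) lam) * v r)^2)
      + (1/2) * (∑ r, (z r - (1 - lam / max (Real.sqrt (∑ r', (v r')^2)) lam) * v r)^2)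
    ≤ (1/2) * (∑ r, (v r - z r)^2) + lam * Real.sqrt (∑ r, (z r)^2) := by
  set Q : ℝ := ∑ r', (v r')^2 with hQdef
  have hQ : 0 ≤ Q := Finset.sum_nonneg fun r _ => sq_nonneg _
  set a : ℝ := Real.sqrt Q with hadef
  have ha0 : 0 ≤ a := Real.sqrt_nonneg _
  have ha2 : a^2 = Q := Real.sq_sqrt hQ
  set nz : ℝ := Real.sqrt (∑ r, (z r)^2) with hnzdef
  have hnz0 : 0 ≤ nz := Real.sqrt_nonneg _
  have hnz2 : nz^2 = ∑ r, (z r)^2 := Real.sq_sqrt (Finset.sum_nonneg fun r _ => sq_nonneg _)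
  have hD : (∑ r, v r * z r) ≤ a * nz := dot_le_sqrt_mul_sqrt v z
  set D : ℝ := ∑ r, v r * z r with hDdef
  rcases le_or_gt a lam with hcase | hcase
  · -- soft-threshold to zero
    have hb : max a lam = lam := max_eq_right hcase
    have hc : (1 - lam / max a lam) = 0 := by rw [hb, div_self hlam.ne']; ring
    rw [hc]
    simp only [zero_mul, sub_zero, ne_eq]
    have h0 : (∑ r : Fin m, (0:ℝ)^2) = 0 := by simp
    rw [h0, Real.sqrt_zero, sum_sub_sq v z]
    have hQsum : (∑ r, (v r)^2) = Q := rfl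
    have : D ≤ lam * nz := le_trans hD (by nlinarith)
    have hzsq : (∑ r, (z r)^2) = nz^2 := hnz2.symm
    rw [hQsum, hzsq]
    nlinarith
  · -- shrink
    have hb : max a lam = a := max_eq_left hcase.le
    have hapos : 0 < a := lt_trans hlam hcase
    rw [hb]
    set c : ℝ := 1 - lam / a with hcdef
    have hdiv : lam / a ≤ 1 := (div_le_one hapos).mpr hcase.le
    have hc0 : 0 ≤ c := by rw [hcdef]; linarith
    have hca : c * a = a - lam := by rw [hcdef]; field_simp
    have h1c : (1 - c) * a = lam := by rw [hcdef]; field_simp; ring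
    -- expand the three sums
    have e1 : (∑ r, (v r - c * v r)^2) = (1-c)^2 * Q := by
      rw [hQdef, Finset.mul_sum]
      exact Finset.sum_congr rfl fun r _ => by ring
    have e2 : (∑ r, (c * v r)^2) = c^2 * Q := by
      rw [hQdef, Finset.mul_sum]
      exact Finset.sum_congr rfl fun r _ => by ring
    have e3 : (∑ r, (z r - c * v r)^2) = nz^2 - 2*c*D + c^2*Q := by
      rw [sum_sub_sq z (fun r => c * v r)]
      have : (∑ r, z r * (c * v r)) = c * D := by
        rw [hDdef, Finset.mul_sum]
        exact Finset.sum_congr rfl fun r _ => by ring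
      rw [this, e2, hnz2]; ring
    have e4 : Real.sqrt (∑ r, (c * v r)^2) = c * a := by
      rw [e2, Real.sqrt_mul (sq_nonneg c), Real.sqrt_sq hc0, hadef]
    rw [e1, e3, e4, sum_sub_sq v z]
    have hQsum : (∑ r, (v r)^2) = Q := rfl
    have hzsq : (∑ r, (z r)^2) = nz^2 := hnz2.symm
    rw [hQsum, hzsq]
    -- remaining: polynomial inequality
    have key : (1-c) * D ≤ lam * nz := by
      calc (1-c) * D ≤ (1-c) * (a * nz) := by
            apply mul_le_mul_of_nonneg_left hD
            rw [hcdef]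
            simp only [sub_sub_cancel]
            positivity
        _ = lam * nz := by rw [← mul_assoc, h1c]
    rw [← hDdef]
    exact case2_ineq lam a nz D c Q ha2.symm key h1c

lemma frobSq_nonneg {m n : ℕ} (A : Matrix (Fin m) (Fin n) ℝ) : 0 ≤ frobSq A :=
  Finset.sum_nonneg fun _ _ => Finset.sum_nonneg fun _ _ => sq_nonneg _

lemma repr_obj {m n : ℕ} (lam : ℝ) (A B : Matrix (Fin m) (Fin n) ℝ) :
    (1/2) * frobSq (A - B) + lam * l12Norm B
      = ∑ i, ((1/2) * (∑ r, (A r i - B r i)^2) + lam * colNorm B i) := by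
  unfold frobSq l12Norm
  simp only [Matrix.sub_apply]
  rw [Finset.sum_comm, Finset.mul_sum, Finset.mul_sum, ← Finset.sum_add_distrib]

theorem prox_l12_block_soft_thresholding {m n : ℕ} (lam : ℝ) (hlam : 0 < lam)
    (M : Matrix (Fin m) (Fin n) ℝ)
    (S : Matrix (Fin m) (Fin n) ℝ)
    (hS : ∀ r i, S r i = (1 - lam / max (colNorm M i) lam) * M r i) :
    (∀ Z, (1/2) * frobSq (M - S) + lam * l12Norm S
        ≤ (1/2) * frobSq (M - Z) + lam * l12Norm Z) ∧
    (∀ Z, (∀ Z', (1/2) * frobSq (M - Z) + lam * l12Norm Z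
        ≤ (1/2) * frobSq (M - Z') + lam * l12Norm Z') → Z = S) ∧
    (∀ r i, colNorm M i ≤ lam → S r i = 0) ∧
    (∀ r i, lam < colNorm M i → S r i = (1 - lam / colNorm M i) * M r i) := by
  have main : ∀ Z : Matrix (Fin m) (Fin n) ℝ,
      (1/2) * frobSq (M - S) + lam * l12Norm S + (1/2) * frobSq (Z - S)
        ≤ (1/2) * frobSq (M - Z) + lam * l12Norm Z := by
    intro Z
    have hfz : (1/2) * frobSq (Z - S) = ∑ i, (1/2) * (∑ r, (Z r i - S r i)^2) := by
      unfold frobSq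
      simp only [Matrix.sub_apply]
      rw [Finset.sum_comm, Finset.mul_sum]
    rw [repr_obj, repr_obj, hfz, ← Finset.sum_add_distrib]
    apply Finset.sum_le_sum
    intro i _
    have hcol : colNorm S i
        = Real.sqrt (∑ r, ((1 - lam / max (Real.sqrt (∑ r', (M r' i)^2)) lam) * M r i)^2) := by
      unfold colNorm
      congr 1
      exact Finset.sum_congr rfl fun r _ => by rw [hS r i]; rfl
    have hScol : ∀ r, S r i = (1 - lam / max (Real.sqrt (∑ r', (M r' i)^2)) lam) * M r i :=
      fun r => hS r i
    simp only [hScol, hcol]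
    have hc2 : colNorm Z i = Real.sqrt (∑ r, (Z r i)^2) := rfl
    rw [hc2]
    exact col_key lam hlam (fun r => M r i) (fun r => Z r i)
  refine ⟨?_, ?_, ?_, ?_⟩
  · intro Z
    have := main Z
    have h2 := frobSq_nonneg (Z - S)
    linarith
  · intro Z hZ
    have h1 := hZ S
    have h2 := main Z
    have h3 : frobSq (Z - S) = 0 :=
      le_antisymm (by linarith) (frobSq_nonneg _)
    unfold frobSq at h3
    have h4 := (Finset.sum_eq_zero_iff_of_nonneg
      (fun r _ => Finset.sum_nonneg fun j _ => sq_nonneg ((Z - S) r j))).mp h3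
    ext r i
    have h5 := (Finset.sum_eq_zero_iff_of_nonneg
      (fun j _ => sq_nonneg ((Z - S) r j))).mp (h4 r (Finset.mem_univ r)) i (Finset.mem_univ i)
    have := pow_eq_zero_iff (n := 2) (by norm_num) |>.mp h5
    have h6 : Z r i - S r i = 0 := by simpa [Matrix.sub_apply] using this
    linarith
  · intro r i h
    rw [hS, max_eq_right h, div_self hlam.ne']
    ring
  · intro r i h
    rw [hS, max_eq_left h.le]
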